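/- Let Γ₁ and Γ₂ be reduced finite simple graphs on the vertex set {1,…,n} with adjacency matrices A₁ and A₂ respectively. If there exist permutations p, q of {1,…,n} such that m_p⁻¹ · A₂ · m_p = A₁ · m_q, then q ∈ Ant(Γ₁), and Γ₁ is isomorphic to Γ₂ if and only if q ∈ Im(α_{Γ₁}). -/

import Mathlib

open SimpleGraph

/-- A graph is reduced (vertex determining) if distinct vertices have distinct
open neighborhoods. -/
def Reduced {V : Type*} (G : SimpleGraph V) : Prop :=
  ∀ u v : V, G.neighborSet u = G.neighborSet v → u = v

/-- The group of two-fold projections of a graph: permutations mapping every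
open neighborhood onto some open neighborhood. -/
def autPi {V : Type*} [Fintype V] (G : SimpleGraph V) : Subgroup (Equiv.Perm V) where
  carrier := {π : Equiv.Perm V | ∀ v : V, ∃ w : V, π '' G.neighborSet v = G.neighborSet w}
  one_mem' := by
    intro v
    exact ⟨v, by simp⟩
  mul_mem' := by
    intro a b ha hb v
    obtain ⟨w, hw⟩ := hb v
    obtain ⟨u, hu⟩ := ha w
    refine ⟨u, ?_⟩
    rw [Equiv.Perm.coe_mul, Set.image_comp, hw, hu]
  inv_mem' := by
    intro a ha v
    have hfin : (Set.range G.neighborSet).Finite := Set.finite_range _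
    have hmaps : Set.MapsTo (Set.image ⇑a) (Set.range G.neighborSet)
        (Set.range G.neighborSet) := by
      rintro s ⟨u, rfl⟩
      obtain ⟨w, hw⟩ := ha u
      exact ⟨w, hw.symm⟩
    have hinj : Set.InjOn (Set.image ⇑a) (Set.range G.neighborSet) :=
      (Set.image_injective.mpr a.injective).injOn
    have hbij := (hfin.injOn_iff_bijOn_of_mapsTo hmaps).mp hinj
    obtain ⟨s, hs, hsv⟩ := hbij.surjOn ⟨v, rfl⟩
    obtain ⟨w, rfl⟩ := hs
    refine ⟨w, ?_⟩
    have : (⇑a⁻¹) '' ((⇑a) '' G.neighborSet w) = G.neighborSet w := by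
      rw [← Set.image_comp]
      simp
    rw [← this, hsv]

/-- The permutation matrix of q: the i-th column is the standard basis vector e_{q(i)}. -/
def permMat {n : ℕ} (q : Equiv.Perm (Fin n)) : Matrix (Fin n) (Fin n) ℚ :=
  Matrix.of fun i j => if i = q j then 1 else 0

/-- If Γ₁, Γ₂ are reduced graphs on {1,…,n} with adjacency matrices A₁, A₂ and
m_p⁻¹ · A₂ · m_p = A₁ · m_q, then q is an antimorphism of Γ₁ (q ∈ Aut^π(Γ₁) with
γ(q) = q⁻¹), and Γ₁ ≅ Γ₂ iff q ∈ Im(α_{Γ₁}). -/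
lemma mul_permMat_apply {n : ℕ} (M : Matrix (Fin n) (Fin n) ℚ) (r : Equiv.Perm (Fin n))
    (i j : Fin n) : (M * permMat r) i j = M i (r j) := by
  simp [Matrix.mul_apply, permMat, mul_ite, mul_one, mul_zero]

lemma permMat_mul_apply {n : ℕ} (r : Equiv.Perm (Fin n)) (M : Matrix (Fin n) (Fin n) ℚ)
    (i j : Fin n) : (permMat r * M) i j = M (r⁻¹ i) j := by
  have hc : ∀ k : Fin n, (i = r k) = (k = r⁻¹ i) := by
    intro k
    apply propext
    constructor
    · intro h; simp [h]
    · intro h; simp [h]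
  simp only [Matrix.mul_apply, permMat, Matrix.of_apply, hc, ite_mul, one_mul, zero_mul]
  simp

lemma permMat_inv {n : ℕ} (r : Equiv.Perm (Fin n)) : (permMat r)⁻¹ = permMat r⁻¹ := by
  apply Matrix.inv_eq_right_inv
  ext i j
  rw [mul_permMat_apply]
  simp [permMat, Matrix.one_apply]

theorem stmt_17 {n : ℕ} (G₁ G₂ : SimpleGraph (Fin n))
    [DecidableRel G₁.Adj] [DecidableRel G₂.Adj]
    (hred₁ : Reduced G₁) (hred₂ : Reduced G₂)
    (γ₁ : autPi G₁ → autPi G₁)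
    (hγ₁ : ∀ (π : autPi G₁) (v : Fin n),
      (π : Equiv.Perm (Fin n)) '' G₁.neighborSet v =
        G₁.neighborSet ((γ₁ π : Equiv.Perm (Fin n)) v))
    (p q : Equiv.Perm (Fin n))
    (hmat : (permMat p)⁻¹ * G₂.adjMatrix ℚ * permMat p = G₁.adjMatrix ℚ * permMat q) :
    ∃ hq : q ∈ autPi G₁,
      γ₁ ⟨q, hq⟩ = (⟨q, hq⟩ : autPi G₁)⁻¹ ∧
      (Nonempty (G₁ ≃g G₂) ↔
        (⟨q, hq⟩ : autPi G₁) ∈ Set.range fun π : autPi G₁ => π⁻¹ * γ₁ π) := by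
  -- Entrywise consequence of the matrix equation
  have hAdj : ∀ i j, G₂.Adj (p i) (p j) ↔ G₁.Adj i (q j) := by
    intro i j
    have h := congrFun (congrFun hmat i) j
    rw [permMat_inv] at h
    rw [mul_permMat_apply, permMat_mul_apply, mul_permMat_apply] at h
    simp only [inv_inv, adjMatrix_apply] at h
    by_cases h1 : G₂.Adj (p i) (p j) <;> by_cases h2 : G₁.Adj i (q j) <;>
      simp [h1, h2] at h ⊢
  have hswap : ∀ i j, G₁.Adj i (q j) ↔ G₁.Adj j (q i) := by
    intro i j
    rw [← hAdj i j, ← hAdj j i, G₂.adj_comm]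
  -- q maps neighborhoods to neighborhoods
  have hqim : ∀ v, ⇑q '' G₁.neighborSet v = G₁.neighborSet (q⁻¹ v) := by
    intro v; ext y
    simp only [Set.mem_image, mem_neighborSet]
    constructor
    · rintro ⟨x, hx, rfl⟩
      rw [hswap]
      simpa [G₁.adj_comm] using hx
    · intro hy
      refine ⟨q⁻¹ y, ?_, by simp⟩
      have h1 : G₁.Adj (q⁻¹ v) (q (q⁻¹ y)) := by simpa using hy
      have h2 := (hswap (q⁻¹ v) (q⁻¹ y)).mp h1
      simp only [Equiv.Perm.coe_inv, Equiv.apply_symm_apply] at h2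
      exact h2.symm
  have hq : q ∈ autPi G₁ := fun v => ⟨q⁻¹ v, hqim v⟩
  set Q : autPi G₁ := ⟨q, hq⟩ with hQdef
  -- general lemmas about γ₁
  have key : ∀ (π : autPi G₁) (v x : Fin n),
      G₁.Adj v x ↔ G₁.Adj ((γ₁ π : Equiv.Perm (Fin n)) v) ((π : Equiv.Perm (Fin n)) x) := by
    intro π v x
    rw [← mem_neighborSet, ← mem_neighborSet, ← hγ₁ π v]
    exact ((Equiv.injective _).mem_set_image).symm
  have gmul : ∀ a b : autPi G₁, γ₁ (a * b) = γ₁ a * γ₁ b := by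
    intro a b
    apply Subtype.ext; apply Equiv.ext; intro v
    apply hred₁
    rw [← hγ₁ (a * b) v]
    have : ((γ₁ a * γ₁ b : autPi G₁) : Equiv.Perm (Fin n)) v
        = (γ₁ a : Equiv.Perm (Fin n)) ((γ₁ b : Equiv.Perm (Fin n)) v) := rfl
    rw [this, ← hγ₁ a _, ← hγ₁ b v]
    show ⇑((a : Equiv.Perm (Fin n)) * (b : Equiv.Perm (Fin n))) '' _ = _
    rw [Equiv.Perm.coe_mul, Set.image_comp]
  have gone : γ₁ 1 = 1 := by
    apply Subtype.ext; apply Equiv.ext; intro v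
    apply hred₁
    rw [← hγ₁ 1 v]
    simp
  have ginv : ∀ a : autPi G₁, γ₁ a⁻¹ = (γ₁ a)⁻¹ := by
    intro a
    have h := gmul a⁻¹ a
    rw [inv_mul_cancel, gone] at h
    exact eq_inv_of_mul_eq_one_left h.symm
  have hγQ : γ₁ Q = Q⁻¹ := by
    apply Subtype.ext; apply Equiv.ext; intro v
    apply hred₁
    rw [← hγ₁ Q v]
    show ⇑q '' _ = G₁.neighborSet (q⁻¹ v)
    exact hqim v
  refine ⟨hq, hγQ, ?_⟩
  constructor
  · rintro ⟨f⟩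
    set π : Equiv.Perm (Fin n) := f.toEquiv.trans p.symm with hπdef
    have hrel : ∀ i j, G₁.Adj i j ↔ G₁.Adj (π i) (q (π j)) := by
      intro i j
      rw [← hAdj (π i) (π j)]
      show _ ↔ G₂.Adj (p (p.symm (f i))) (p (p.symm (f j)))
      simp only [Equiv.apply_symm_apply]
      exact f.map_adj_iff.symm
    have hTim : ∀ v, ⇑(q * π) '' G₁.neighborSet v = G₁.neighborSet (π v) := by
      intro v; ext y
      simp only [Set.mem_image, mem_neighborSet, Equiv.Perm.coe_mul, Function.comp_apply]
      constructor
      · rintro ⟨x, hx, rfl⟩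
        exact (hrel v x).mp hx
      · intro hy
        refine ⟨π⁻¹ (q⁻¹ y), (hrel v _).mpr ?_, by simp⟩
        simpa using hy
    have hT : (q * π) ∈ autPi G₁ := fun v => ⟨π v, hTim v⟩
    set T : autPi G₁ := ⟨q * π, hT⟩ with hTdef
    set P : autPi G₁ := Q⁻¹ * T with hPdef
    have hPcoe : ∀ v, (P : Equiv.Perm (Fin n)) v = π v := by
      intro v
      show q⁻¹ (q (π v)) = π v
      simp
    have hγT : γ₁ T = P := by
      apply Subtype.ext; apply Equiv.ext; intro v
      apply hred₁
      rw [← hγ₁ T v, hPcoe v]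
      exact hTim v
    refine ⟨T⁻¹, ?_⟩
    show T⁻¹⁻¹ * γ₁ T⁻¹ = Q
    rw [ginv, hγT, hPdef]
    group
  · rintro ⟨π, hπ⟩
    have hqv : ∀ y, q y = (π : Equiv.Perm (Fin n))⁻¹ ((γ₁ π : Equiv.Perm (Fin n)) y) := by
      intro y
      have := congrArg (fun z : autPi G₁ => (z : Equiv.Perm (Fin n)) y) hπ
      simpa using this.symm
    refine ⟨⟨((γ₁ π : Equiv.Perm (Fin n))⁻¹).trans p, ?_⟩⟩
    intro a b
    show G₂.Adj (p ((γ₁ π : Equiv.Perm (Fin n))⁻¹ a)) (p ((γ₁ π : Equiv.Perm (Fin n))⁻¹ b))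
        ↔ G₁.Adj a b
    rw [hAdj, hqv, key π]
    simp
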